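/- In a parallel system, if p_i ≤ p_j then the posterior intervals are nested: P[u = 0 | y_i = 1] ≤ P[u = 0 | y_j = 1] and P[u = 0 | y_i = 0] ≥ P[u = 0 | y_j = 0], provided 0 < h_i < 1 and 0 < h_j < 1. -/

import Mathlib

open scoped Classical

/-- Probability of an event `E` under weights `w` on a finite outcome space. -/
noncomputable def Pr {Ω : Type*} [Fintype Ω] (w : Ω → ℝ) (E : Ω → Prop) : ℝ :=
  ∑ ω ∈ Finset.univ.filter E, w ω

/-- Conditional probability `P[A | B]`. -/
noncomputable def cPr {Ω : Type*} [Fintype Ω] (w : Ω → ℝ) (A B : Ω → Prop) : ℝ :=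
  Pr w (fun ω => A ω ∧ B ω) / Pr w B

section helpers
variable {Ω : Type*} [Fintype Ω] (w : Ω → ℝ)

lemma Pr_eq_sum_ite (E : Ω → Prop) : Pr w E = ∑ ω, if E ω then w ω else 0 :=
  Finset.sum_filter _ _

lemma Pr_nonneg (hw0 : ∀ ω, 0 ≤ w ω) (E : Ω → Prop) : 0 ≤ Pr w E :=
  Finset.sum_nonneg fun ω _ => hw0 ω

lemma Pr_congr {E F : Ω → Prop} (h : ∀ ω, E ω ↔ F ω) : Pr w E = Pr w F := by
  rw [Pr_eq_sum_ite, Pr_eq_sum_ite]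
  apply Finset.sum_congr rfl
  intro ω _
  by_cases hE : E ω
  · rw [if_pos hE, if_pos ((h ω).mp hE)]
  · rw [if_neg hE, if_neg (fun hF => hE ((h ω).mpr hF))]

lemma Pr_mono (hw0 : ∀ ω, 0 ≤ w ω) {E F : Ω → Prop} (h : ∀ ω, E ω → F ω) :
    Pr w E ≤ Pr w F := by
  rw [Pr_eq_sum_ite, Pr_eq_sum_ite]
  apply Finset.sum_le_sum
  intro ω _
  by_cases hE : E ω
  · rw [if_pos hE, if_pos (h ω hE)]
  · rw [if_neg hE]
    split <;> simp [hw0 ω]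

lemma Pr_split (E Q : Ω → Prop) :
    Pr w E = Pr w (fun ω => E ω ∧ Q ω) + Pr w (fun ω => E ω ∧ ¬ Q ω) := by
  simp only [Pr_eq_sum_ite]
  rw [← Finset.sum_add_distrib]
  apply Finset.sum_congr rfl
  intro ω _
  by_cases hE : E ω <;> by_cases hQ : Q ω <;> simp [hE, hQ]

lemma Pr_true (hw1 : ∑ ω, w ω = 1) : Pr w (fun _ => True) = 1 := by
  rw [Pr_eq_sum_ite]; simpa using hw1

lemma Pr_fiber {β : Type*} [Fintype β] [DecidableEq β] (sfun : Ω → β) (E : Ω → Prop) :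
    Pr w E = ∑ σ : β, Pr w (fun ω => E ω ∧ sfun ω = σ) := by
  simp only [Pr_eq_sum_ite]
  rw [Finset.sum_comm]
  apply Finset.sum_congr rfl
  intro ω _
  by_cases hE : E ω
  · simp [hE]
  · simp [hE]

end helpers

section main
variable {Ω : Type*} [Fintype Ω] {N : ℕ} (w : Ω → ℝ)

lemma joint_eq (hw0 : ∀ ω, 0 ≤ w ω) (s : Ω → Fin N → Bool) (y : Fin N → Ω → Bool)
    (εFA εFS : ℝ)
    (hemit : ∀ (k : Fin N) (σ : Fin N → Bool), 0 < Pr w (fun ω => s ω = σ) →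
      cPr w (fun ω => y k ω = false) (fun ω => s ω = σ)
        = if σ k = true then εFA else 1 - εFS)
    (k : Fin N) (σ : Fin N → Bool) :
    Pr w (fun ω => y k ω = false ∧ s ω = σ)
      = (if σ k = true then εFA else 1 - εFS) * Pr w (fun ω => s ω = σ) := by
  rcases (Pr_nonneg w hw0 (fun ω => s ω = σ)).eq_or_lt with hq | hq
  · have h1 : Pr w (fun ω => y k ω = false ∧ s ω = σ) ≤ Pr w (fun ω => s ω = σ) :=
      Pr_mono w hw0 (fun ω h => h.2)
    have h2 : 0 ≤ Pr w (fun ω => y k ω = false ∧ s ω = σ) := Pr_nonneg w hw0 _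
    rw [← hq] at h1
    rw [le_antisymm h1 h2, ← hq, mul_zero]
  · have := hemit k σ hq
    unfold cPr at this
    rw [div_eq_iff (ne_of_gt hq)] at this
    rw [this]

lemma h_eq (hw0 : ∀ ω, 0 ≤ w ω) (hw1 : ∑ ω, w ω = 1)
    (s : Ω → Fin N → Bool) (y : Fin N → Ω → Bool) (εFA εFS : ℝ)
    (hemit : ∀ (k : Fin N) (σ : Fin N → Bool), 0 < Pr w (fun ω => s ω = σ) →
      cPr w (fun ω => y k ω = false) (fun ω => s ω = σ)
        = if σ k = true then εFA else 1 - εFS)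
    (k : Fin N) :
    Pr w (fun ω => y k ω = false)
      = εFA * (1 - Pr w (fun ω => s ω k = false))
        + (1 - εFS) * Pr w (fun ω => s ω k = false) := by
  set p := Pr w (fun ω => s ω k = false) with hp
  -- p as a sum over σ
  have hpsum : p = ∑ σ : Fin N → Bool,
      (if σ k = true then 0 else Pr w (fun ω => s ω = σ)) := by
    rw [hp, Pr_fiber w s (fun ω => s ω k = false)]
    apply Finset.sum_congr rfl
    intro σ _
    by_cases hσ : σ k = true
    · rw [if_pos hσ]
      have : Pr w (fun ω => s ω k = false ∧ s ω = σ) = Pr w (fun _ => False) := by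
        apply Pr_congr
        intro ω
        constructor
        · rintro ⟨h1, h2⟩
          rw [h2] at h1; rw [hσ] at h1; exact Bool.noConfusion h1
        · intro h; exact h.elim
      rw [this]
      simp [Pr_eq_sum_ite]
    · rw [if_neg hσ]
      apply Pr_congr
      intro ω
      constructor
      · rintro ⟨_, h2⟩; exact h2
      · intro h2
        refine ⟨?_, h2⟩
        rw [h2]
        exact Bool.eq_false_iff.mpr hσ
  have htot : (∑ σ : Fin N → Bool, Pr w (fun ω => s ω = σ)) = 1 := by
    have := Pr_fiber w s (fun _ : Ω => True)
    rw [Pr_true w hw1] at this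
    rw [this]
    apply Finset.sum_congr rfl
    intro σ _
    apply Pr_congr
    intro ω
    simp
  have hfib := Pr_fiber w s (fun ω => y k ω = false)
  rw [hfib]
  have : ∀ σ : Fin N → Bool, Pr w (fun ω => y k ω = false ∧ s ω = σ)
      = (if σ k = true then εFA else 1 - εFS) * Pr w (fun ω => s ω = σ) :=
    joint_eq w hw0 s y εFA εFS hemit k
  calc (∑ σ : Fin N → Bool, Pr w (fun ω => y k ω = false ∧ s ω = σ))
      = ∑ σ : Fin N → Bool,
          (εFA * (if σ k = true then Pr w (fun ω => s ω = σ) else 0)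
           + (1 - εFS) * (if σ k = true then 0 else Pr w (fun ω => s ω = σ))) := by
        apply Finset.sum_congr rfl
        intro σ _
        rw [this σ]
        by_cases hσ : σ k = true <;> simp [hσ]
    _ = εFA * (∑ σ : Fin N → Bool, (if σ k = true then Pr w (fun ω => s ω = σ) else 0))
        + (1 - εFS) * (∑ σ : Fin N → Bool, (if σ k = true then 0 else Pr w (fun ω => s ω = σ))) := by
        rw [Finset.sum_add_distrib, Finset.mul_sum, Finset.mul_sum]
    _ = εFA * (1 - p) + (1 - εFS) * p := by
        have hA : (∑ σ : Fin N → Bool, (if σ k = true then Pr w (fun ω => s ω = σ) else 0))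
            = 1 - p := by
          have : (∑ σ : Fin N → Bool, (if σ k = true then Pr w (fun ω => s ω = σ) else 0))
              + (∑ σ : Fin N → Bool, (if σ k = true then 0 else Pr w (fun ω => s ω = σ)))
              = 1 := by
            rw [← Finset.sum_add_distrib, ← htot]
            apply Finset.sum_congr rfl
            intro σ _
            by_cases hσ : σ k = true <;> simp [hσ]
          rw [← hpsum] at this
          linarith
        rw [hA, ← hpsum]

end main

/-- In a parallel system (the system fails iff every component fails), with the
same inspection error rates for all components, if `p_i ≤ p_j` then the posterior intervals
are nested: `P[u=0 | y_i=1] ≤ P[u=0 | y_j=1]` and `P[u=0 | y_i=0] ≥ P[u=0 | y_j=0]`,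
provided `0 < h_i < 1` and `0 < h_j < 1`. -/
theorem parallel_nested_intervals {Ω : Type*} [Fintype Ω] {N : ℕ} (w : Ω → ℝ)
    (hw0 : ∀ ω, 0 ≤ w ω) (hw1 : ∑ ω, w ω = 1)
    (s : Ω → Fin N → Bool) (y : Fin N → Ω → Bool)
    (εFA εFS : ℝ) (hFA0 : 0 ≤ εFA) (hFA : εFA < 1/2) (hFS0 : 0 ≤ εFS) (hFS : εFS < 1/2)
    (hemit : ∀ (k : Fin N) (σ : Fin N → Bool), 0 < Pr w (fun ω => s ω = σ) →
      cPr w (fun ω => y k ω = false) (fun ω => s ω = σ)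
        = if σ k = true then εFA else 1 - εFS)
    (i j : Fin N)
    (hi0 : 0 < Pr w (fun ω => y i ω = false)) (hi1 : Pr w (fun ω => y i ω = false) < 1)
    (hj0 : 0 < Pr w (fun ω => y j ω = false)) (hj1 : Pr w (fun ω => y j ω = false) < 1)
    (hpij : Pr w (fun ω => s ω i = false) ≤ Pr w (fun ω => s ω j = false)) :
    cPr w (fun ω => ∀ k, s ω k = false) (fun ω => y i ω = true)
        ≤ cPr w (fun ω => ∀ k, s ω k = false) (fun ω => y j ω = true)
      ∧ cPr w (fun ω => ∀ k, s ω k = false) (fun ω => y j ω = false)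
        ≤ cPr w (fun ω => ∀ k, s ω k = false) (fun ω => y i ω = false) := by
  set σ0 : Fin N → Bool := fun _ => false with hσ0
  set pπ := Pr w (fun ω => s ω = σ0) with hpπ
  have hpπ0 : 0 ≤ pπ := Pr_nonneg w hw0 _
  have hU : ∀ ω, (∀ k, s ω k = false) ↔ s ω = σ0 := by
    intro ω
    constructor
    · intro h; funext k; exact h k
    · intro h k; rw [h]
  -- numerator with y = false
  have num_false : ∀ k : Fin N,
      Pr w (fun ω => (∀ m, s ω m = false) ∧ y k ω = false) = (1 - εFS) * pπ := by
    intro k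
    have h1 : Pr w (fun ω => (∀ m, s ω m = false) ∧ y k ω = false)
        = Pr w (fun ω => y k ω = false ∧ s ω = σ0) := by
      apply Pr_congr
      intro ω
      rw [hU ω]
      tauto
    rw [h1, joint_eq w hw0 s y εFA εFS hemit k σ0]
    simp [hσ0]
    exact Or.inl rfl
  -- numerator with y = true
  have num_true : ∀ k : Fin N,
      Pr w (fun ω => (∀ m, s ω m = false) ∧ y k ω = true) = εFS * pπ := by
    intro k
    have hsplit := Pr_split w (fun ω => s ω = σ0) (fun ω => y k ω = false)
    have h1 : Pr w (fun ω => s ω = σ0 ∧ y k ω = false)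
        = Pr w (fun ω => y k ω = false ∧ s ω = σ0) := Pr_congr w (fun ω => by tauto)
    have h2 : Pr w (fun ω => s ω = σ0 ∧ ¬ y k ω = false)
        = Pr w (fun ω => (∀ m, s ω m = false) ∧ y k ω = true) := by
      apply Pr_congr
      intro ω
      rw [hU ω]
      simp [Bool.not_eq_false]
    rw [h1, h2, joint_eq w hw0 s y εFA εFS hemit k σ0] at hsplit
    simp [hσ0] at hsplit
    rw [← hpπ] at hsplit
    linarith
  -- denominator with y = true
  have den_true : ∀ k : Fin N,
      Pr w (fun ω => y k ω = true) = 1 - Pr w (fun ω => y k ω = false) := by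
    intro k
    have hsplit := Pr_split w (fun _ : Ω => True) (fun ω => y k ω = false)
    rw [Pr_true w hw1] at hsplit
    have h1 : Pr w (fun ω => True ∧ y k ω = false) = Pr w (fun ω => y k ω = false) :=
      Pr_congr w (fun ω => by tauto)
    have h2 : Pr w (fun ω => True ∧ ¬ y k ω = false) = Pr w (fun ω => y k ω = true) := by
      apply Pr_congr
      intro ω
      simp [Bool.not_eq_false]
    rw [h1, h2] at hsplit
    linarith
  -- h values
  have hhi := h_eq w hw0 hw1 s y εFA εFS hemit i
  have hhj := h_eq w hw0 hw1 s y εFA εFS hemit j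
  set hi := Pr w (fun ω => y i ω = false) with hhi'
  set hj := Pr w (fun ω => y j ω = false) with hhj'
  have hij : hi ≤ hj := by
    have hK : 0 ≤ (1 - εFA - εFS) *
        (Pr w (fun ω => s ω j = false) - Pr w (fun ω => s ω i = false)) :=
      mul_nonneg (by linarith) (by linarith)
    nlinarith [hK]
  constructor
  · unfold cPr
    rw [num_true i, num_true j, den_true i, den_true j]
    have h1 : (0:ℝ) < 1 - hj := by linarith
    have h2 : (0:ℝ) < 1 - hi := by linarith
    exact div_le_div_of_nonneg_left (mul_nonneg hFS0 hpπ0) h1 (by linarith)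
  · unfold cPr
    rw [num_false i, num_false j]
    apply div_le_div_of_nonneg_left (mul_nonneg (by linarith) hpπ0) hi0 hij
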